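/- Interaction integral identity: for D ≥ 3, ((D+2)/(D−2)) ∫₀^∞ ΛW(r) W(r)^{4/(D−2)} r^{D−1} dr = −((D−2)/(2D)) (D(D−2))^{D/2}, where W(r) = (1 + r²/(D(D−2)))^{−(D−2)/2} and ΛW = rW' + ((D−2)/2)W. -/

import Mathlib

open MeasureTheory Real Set Filter Topology

/-- The Aubin–Talenti profile in radial coordinates. -/
noncomputable def AubinTalentiW (D : ℕ) (r : ℝ) : ℝ :=
  (1 + r ^ 2 / ((D : ℝ) * ((D : ℝ) - 2))) ^ (-(((D : ℝ) - 2) / 2))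

/-- The scaling mode `ΛW = r W' + ((D-2)/2) W`. -/
noncomputable def LamW (D : ℕ) (r : ℝ) : ℝ :=
  r * deriv (AubinTalentiW D) r + ((D : ℝ) - 2) / 2 * AubinTalentiW D r

noncomputable def cc (D : ℕ) : ℝ := (D : ℝ) * ((D : ℝ) - 2)

lemma hcpos (D : ℕ) (hD : 3 ≤ D) : 0 < cc D := by
  have h : (3:ℝ) ≤ (D:ℝ) := by exact_mod_cast hD
  have h1 : (0:ℝ) < (D:ℝ) - 2 := by linarith
  have h2 : (0:ℝ) < (D:ℝ) := by linarith
  exact mul_pos h2 h1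

lemma hspos (D : ℕ) (hD : 3 ≤ D) (r : ℝ) : 0 < 1 + r ^ 2 / cc D := by
  have h1 : 0 ≤ r ^ 2 / cc D := div_nonneg (sq_nonneg r) (hcpos D hD).le
  linarith

lemma hWderiv (D : ℕ) (hD : 3 ≤ D) (r : ℝ) :
    HasDerivAt (AubinTalentiW D)
      (-(((D:ℝ)-2)/cc D) * r * (1 + r ^ 2 / cc D) ^ (-(D:ℝ)/2)) r := by
  have hs := hspos D hD r
  have h1 : HasDerivAt (fun x : ℝ => 1 + x ^ 2 / cc D) (2 * r / cc D) r := by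
    simpa using ((hasDerivAt_pow 2 r).div_const (cc D)).const_add 1
  have h2 := h1.rpow_const (p := -(((D:ℝ)-2)/2)) (Or.inl hs.ne')
  have hexp : -(((D:ℝ)-2)/2) - 1 = -(D:ℝ)/2 := by ring
  rw [hexp] at h2
  have h3 : AubinTalentiW D = fun x : ℝ => (1 + x ^ 2 / cc D) ^ (-(((D:ℝ)-2)/2)) := rfl
  rw [h3]
  convert h2 using 1
  ring

/-- explicit form of the integrand -/
noncomputable def hh (D : ℕ) (r : ℝ) : ℝ :=
  ((D:ℝ)-2)/2 * (1 - r ^ 2 / cc D) * r ^ (D-1) * (1 + r ^ 2 / cc D) ^ (-((D:ℝ)+4)/2)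

/-- antiderivative -/
noncomputable def FF (D : ℕ) (r : ℝ) : ℝ :=
  (-(((D:ℝ)-2)^2 / (2*(D:ℝ)*((D:ℝ)+2)))) * (r ^ D * (1 + r ^ 2 / cc D) ^ (-(D:ℝ)/2))
  + (((D:ℝ)-2)/((D:ℝ)+2)) * (r ^ D * (1 + r ^ 2 / cc D) ^ (-((D:ℝ)+2)/2))

lemma geq (D : ℕ) (hD : 3 ≤ D) (r : ℝ) (hr : 0 < r) :
    LamW D r * (AubinTalentiW D r) ^ ((4 : ℝ) / ((D : ℝ) - 2)) * r ^ ((D : ℝ) - 1)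
      = hh D r := by
  have hs := hspos D hD r
  have hd2 : ((D:ℝ) - 2) ≠ 0 := by
    have h : (3:ℝ) ≤ (D:ℝ) := by exact_mod_cast hD
    intro h0; rw [sub_eq_zero] at h0; linarith
  have hdederiv : deriv (AubinTalentiW D) r
      = -(((D:ℝ)-2)/cc D) * r * (1 + r ^ 2 / cc D) ^ (-(D:ℝ)/2) :=
    (hWderiv D hD r).deriv
  have hA : AubinTalentiW D r = (1 + r ^ 2 / cc D) ^ (-(((D:ℝ)-2)/2)) := rfl
  have hW4 : (AubinTalentiW D r) ^ ((4 : ℝ) / ((D : ℝ) - 2))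
      = (1 + r ^ 2 / cc D) ^ (-2 : ℝ) := by
    rw [hA, ← Real.rpow_mul hs.le]
    congr 1
    field_simp
    ring
  have hrD : r ^ ((D : ℝ) - 1) = r ^ (D - 1) := by
    rw [show (D:ℝ) - 1 = ((D - 1 : ℕ) : ℝ) by
      push_cast [Nat.cast_sub (by omega : 1 ≤ D)]; ring]
    exact Real.rpow_natCast r (D-1)
  rw [LamW, hdederiv, hW4, hrD, hA]
  have m1 : (1 + r ^ 2 / cc D) ^ (-(D:ℝ)/2) * (1 + r ^ 2 / cc D) ^ (-2:ℝ)
      = (1 + r ^ 2 / cc D) ^ (-((D:ℝ)+4)/2) := by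
    rw [← Real.rpow_add hs]; congr 1; ring
  have m2 : (1 + r ^ 2 / cc D) ^ (-(((D:ℝ)-2)/2)) * (1 + r ^ 2 / cc D) ^ (-2:ℝ)
      = (1 + r ^ 2 / cc D) * (1 + r ^ 2 / cc D) ^ (-((D:ℝ)+4)/2) := by
    rw [← Real.rpow_add hs,
      show -(((D:ℝ)-2)/2) + (-2:ℝ) = 1 + -((D:ℝ)+4)/2 by ring,
      Real.rpow_add hs, Real.rpow_one]
  calc (r * (-(((D:ℝ)-2)/cc D) * r * (1 + r ^ 2 / cc D) ^ (-(D:ℝ)/2))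
          + ((D:ℝ)-2)/2 * (1 + r ^ 2 / cc D) ^ (-(((D:ℝ)-2)/2)))
        * (1 + r ^ 2 / cc D) ^ (-2:ℝ) * r ^ (D-1)
      = (-(((D:ℝ)-2)/cc D) * r ^ 2)
          * ((1 + r ^ 2 / cc D) ^ (-(D:ℝ)/2) * (1 + r ^ 2 / cc D) ^ (-2:ℝ)) * r ^ (D-1)
        + (((D:ℝ)-2)/2)
          * ((1 + r ^ 2 / cc D) ^ (-(((D:ℝ)-2)/2)) * (1 + r ^ 2 / cc D) ^ (-2:ℝ)) * r ^ (D-1) := by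
        ring
    _ = hh D r := by
        rw [m1, m2, hh]
        have hc := hcpos D hD
        field_simp
        ring

lemma hFderiv (D : ℕ) (hD : 3 ≤ D) (r : ℝ) : HasDerivAt (FF D) (hh D r) r := by
  have hs := hspos D hD r
  have hc := hcpos D hD
  have h1 : HasDerivAt (fun x : ℝ => 1 + x ^ 2 / cc D) (2 * r / cc D) r := by
    simpa using ((hasDerivAt_pow 2 r).div_const (cc D)).const_add 1
  have hp := hasDerivAt_pow D r
  have h2 := h1.rpow_const (p := -(D:ℝ)/2) (Or.inl hs.ne')
  have h3 := h1.rpow_const (p := -((D:ℝ)+2)/2) (Or.inl hs.ne')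
  have h4 := ((hp.mul h2).const_mul (-(((D:ℝ)-2)^2 / (2*(D:ℝ)*((D:ℝ)+2))))).add
    ((hp.mul h3).const_mul (((D:ℝ)-2)/((D:ℝ)+2)))
  have hFF : FF D = fun x : ℝ =>
      (-(((D:ℝ)-2)^2 / (2*(D:ℝ)*((D:ℝ)+2)))) * (x ^ D * (1 + x ^ 2 / cc D) ^ (-(D:ℝ)/2))
      + (((D:ℝ)-2)/((D:ℝ)+2)) * (x ^ D * (1 + x ^ 2 / cc D) ^ (-((D:ℝ)+2)/2)) := rfl
  rw [hFF]
  convert h4 using 1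
  case e'_4 => rfl
  case e'_5 => rfl
  case e'_8 => rfl
  -- rewrite all rpow exponents in terms of X = s ^ (-((D:ℝ)+4)/2)
  have q1 : (1 + r ^ 2 / cc D) ^ (-(D:ℝ)/2)
      = (1 + r ^ 2 / cc D) * ((1 + r ^ 2 / cc D) * (1 + r ^ 2 / cc D) ^ (-((D:ℝ)+4)/2)) := by
    rw [show -(D:ℝ)/2 = 1 + (1 + -((D:ℝ)+4)/2) by ring, Real.rpow_add hs, Real.rpow_one,
      Real.rpow_add hs, Real.rpow_one]
  have q2 : (1 + r ^ 2 / cc D) ^ (-(D:ℝ)/2 - 1)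
      = (1 + r ^ 2 / cc D) * (1 + r ^ 2 / cc D) ^ (-((D:ℝ)+4)/2) := by
    rw [show -(D:ℝ)/2 - 1 = 1 + -((D:ℝ)+4)/2 by ring, Real.rpow_add hs, Real.rpow_one]
  have q3 : (1 + r ^ 2 / cc D) ^ (-((D:ℝ)+2)/2)
      = (1 + r ^ 2 / cc D) * (1 + r ^ 2 / cc D) ^ (-((D:ℝ)+4)/2) := by
    rw [show -((D:ℝ)+2)/2 = 1 + -((D:ℝ)+4)/2 by ring, Real.rpow_add hs, Real.rpow_one]
  have q4 : (1 + r ^ 2 / cc D) ^ (-((D:ℝ)+2)/2 - 1)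
      = (1 + r ^ 2 / cc D) ^ (-((D:ℝ)+4)/2) := by
    congr 1; ring
  rw [hh, q1, q2, q3, q4]
  obtain ⟨n, rfl⟩ : ∃ n, D = n + 3 := ⟨D - 3, by omega⟩
  have hnn : n + 3 - 1 = n + 2 := by omega
  rw [hnn]
  push_cast
  have hcne : cc (n+3) ≠ 0 := hc.ne'
  have hd2 : ((n:ℝ) + 3) + 2 ≠ 0 := by positivity
  have hdd : 2 * ((n:ℝ)+3) * (((n:ℝ)+3)+2) ≠ 0 := by positivity
  field_simp
  ring

lemma hFlim (D : ℕ) (hD : 3 ≤ D) :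
    Filter.Tendsto (FF D) atTop
      (𝓝 ((-(((D:ℝ)-2)^2 / (2*(D:ℝ)*((D:ℝ)+2)))) * cc D ^ ((D:ℝ)/2))) := by
  have hc := hcpos D hD
  -- r^2/(1+r^2/c) → c
  have h2 : Tendsto (fun r : ℝ => cc D + r ^ 2) atTop atTop :=
    tendsto_atTop_add_const_left _ _ (tendsto_pow_atTop two_ne_zero)
  have l1 : Tendsto (fun r : ℝ => r ^ 2 / (1 + r ^ 2 / cc D)) atTop (𝓝 (cc D)) := by
    have h3 : Tendsto (fun r : ℝ => cc D - cc D ^ 2 / (cc D + r ^ 2)) atTop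
        (𝓝 (cc D - 0)) := tendsto_const_nhds.sub (tendsto_const_nhds.div_atTop h2)
    rw [sub_zero] at h3
    refine h3.congr fun r => ?_
    have hpos : 0 < cc D + r ^ 2 := by positivity
    have hs := hspos D hD r
    field_simp
    ring
  have l2 : Tendsto (fun r : ℝ => (r ^ 2 / (1 + r ^ 2 / cc D)) ^ ((D:ℝ)/2)) atTop
      (𝓝 (cc D ^ ((D:ℝ)/2))) :=
    ((Real.continuousAt_rpow_const _ _ (Or.inl hc.ne')).tendsto).comp l1
  have l3 : Tendsto (fun r : ℝ => 1 + r ^ 2 / cc D) atTop atTop :=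
    tendsto_atTop_add_const_left _ _ ((tendsto_pow_atTop two_ne_zero).atTop_div_const hc)
  have l4 : Tendsto (fun r : ℝ => (1 + r ^ 2 / cc D)⁻¹) atTop (𝓝 0) :=
    l3.inv_tendsto_atTop
  have key : Tendsto (fun r : ℝ =>
      (-(((D:ℝ)-2)^2 / (2*(D:ℝ)*((D:ℝ)+2)))) * (r ^ 2 / (1 + r ^ 2 / cc D)) ^ ((D:ℝ)/2)
      + (((D:ℝ)-2)/((D:ℝ)+2)) * ((r ^ 2 / (1 + r ^ 2 / cc D)) ^ ((D:ℝ)/2)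
          * (1 + r ^ 2 / cc D)⁻¹)) atTop
      (𝓝 ((-(((D:ℝ)-2)^2 / (2*(D:ℝ)*((D:ℝ)+2)))) * cc D ^ ((D:ℝ)/2)
        + (((D:ℝ)-2)/((D:ℝ)+2)) * (cc D ^ ((D:ℝ)/2) * 0))) :=
    ((l2.const_mul _).add ((l2.mul l4).const_mul _))
  rw [mul_zero, mul_zero, add_zero] at key
  refine Tendsto.congr' ?_ key
  filter_upwards [Filter.Ioi_mem_atTop (0:ℝ)] with r hr
  have hr0 : (0:ℝ) < r := hr
  have hs := hspos D hD r
  have er : (r ^ 2 / (1 + r ^ 2 / cc D)) ^ ((D:ℝ)/2)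
      = r ^ D * (1 + r ^ 2 / cc D) ^ (-(D:ℝ)/2) := by
    rw [Real.div_rpow (sq_nonneg r) hs.le]
    nth_rewrite 1 [← Real.rpow_natCast r 2]
    rw [← Real.rpow_mul hr0.le,
      show ((2:ℕ):ℝ) * ((D:ℝ)/2) = ((D:ℕ):ℝ) by push_cast; ring,
      Real.rpow_natCast, neg_div, Real.rpow_neg hs.le, div_eq_mul_inv]
  have er2 : r ^ D * (1 + r ^ 2 / cc D) ^ (-((D:ℝ)+2)/2)
      = (r ^ 2 / (1 + r ^ 2 / cc D)) ^ ((D:ℝ)/2) * (1 + r ^ 2 / cc D)⁻¹ := by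
    rw [er, show -((D:ℝ)+2)/2 = -(D:ℝ)/2 + (-1) by ring, Real.rpow_add hs,
      Real.rpow_neg_one]
    ring
  simp only [FF]
  rw [er2, er]

lemma hhcont (D : ℕ) (hD : 3 ≤ D) : Continuous (hh D) := by
  have hrpow : Continuous fun r : ℝ => (1 + r ^ 2 / cc D) ^ (-((D:ℝ)+4)/2) := by
    refine Continuous.rpow_const ?_ fun x => Or.inl (hspos D hD x).ne'
    continuity
  exact (((continuous_const.mul
    (continuous_const.sub ((continuous_pow 2).div_const _))).mul
    (continuous_pow _))).mul hrpow

lemma hhint (D : ℕ) (hD : 3 ≤ D) : IntegrableOn (hh D) (Set.Ioi (0:ℝ)) := by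
  have hc := hcpos D hD
  set a := Real.sqrt (cc D) with ha_def
  have ha : 0 < a := Real.sqrt_pos.mpr hc
  have hsplit : Set.Ioc (0:ℝ) a ∪ Set.Ioi a = Set.Ioi (0:ℝ) := Set.Ioc_union_Ioi_eq_Ioi ha.le
  rw [← hsplit]
  refine IntegrableOn.union ?_ ?_
  · exact (hhcont D hD).integrableOn_Ioc
  · refine integrableOn_Ioi_deriv_of_nonpos' (fun x _ => hFderiv D hD x) ?_ (hFlim D hD)
    intro x hx
    have hx0 : 0 < x := lt_of_le_of_lt (Real.sqrt_nonneg _) hx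
    have hx2 : cc D < x ^ 2 := by
      nlinarith [Real.sq_sqrt hc.le, Real.sqrt_nonneg (cc D), hx.out]
    have h1 : 1 - x ^ 2 / cc D ≤ 0 := by
      have : 1 < x ^ 2 / cc D := (one_lt_div hc).mpr hx2
      linarith
    have hD2 : (0:ℝ) ≤ ((D:ℝ)-2)/2 := by
      have h : (3:ℝ) ≤ (D:ℝ) := by exact_mod_cast hD
      linarith
    have hX : (0:ℝ) ≤ (1 + x ^ 2 / cc D) ^ (-((D:ℝ)+4)/2) :=
      Real.rpow_nonneg (hspos D hD x).le _
    unfold hh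
    apply mul_nonpos_of_nonpos_of_nonneg _ hX
    apply mul_nonpos_of_nonpos_of_nonneg _ (pow_nonneg hx0.le _)
    exact mul_nonpos_of_nonneg_of_nonpos hD2 h1

theorem stmt_7 (D : ℕ) (hD : 3 ≤ D) :
    ((D : ℝ) + 2) / ((D : ℝ) - 2)
      * ∫ r in Set.Ioi (0 : ℝ),
          LamW D r * (AubinTalentiW D r) ^ ((4 : ℝ) / ((D : ℝ) - 2)) * r ^ ((D : ℝ) - 1)
      = -(((D : ℝ) - 2) / (2 * (D : ℝ))) * ((D : ℝ) * ((D : ℝ) - 2)) ^ ((D : ℝ) / 2) := by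
  have hc := hcpos D hD
  have key := integral_Ioi_of_hasDerivAt_of_tendsto (f := FF D) (f' := hh D) (a := 0)
    (hFderiv D hD 0).continuousAt.continuousWithinAt (fun x _ => hFderiv D hD x)
    (hhint D hD) (hFlim D hD)
  have hF0 : FF D 0 = 0 := by
    simp [FF, zero_pow (by omega : D ≠ 0)]
  rw [setIntegral_congr_fun measurableSet_Ioi (fun x hx => geq D hD x hx), key, hF0, sub_zero]
  have hcc : ((D : ℝ) * ((D : ℝ) - 2)) ^ ((D : ℝ) / 2) = cc D ^ ((D:ℝ)/2) := rfl
  rw [hcc]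
  have hD3 : (3:ℝ) ≤ (D:ℝ) := by exact_mod_cast hD
  have h1 : (D:ℝ) - 2 ≠ 0 := by intro h; rw [sub_eq_zero] at h; linarith
  have h2 : (D:ℝ) ≠ 0 := by positivity
  have h3 : (D:ℝ) + 2 ≠ 0 := by positivity
  field_simp
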